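/- Let A = S + g·hᵀ and B = S + g·kᵀ be stable real n×n matrices in companion form, and suppose X and Y are nonzero real symmetric positive semidefinite matrices with A·X + X·Aᵀ + B·Y + Y·Bᵀ = 0. Set Z = X + Y. Then ⟨k−h, Y·(k−h)⟩ > 0, and the vector w = ⟨k−h, Y·(k−h)⟩^{−1/2} · Y·(k−h) satisfies: (i) Π·S·Z·Π + Π·Z·Sᵀ·Π = 0; (ii) S·Z·g + Z·h + ⟨w, k−h⟩·w = 0; and (iii) Z − w·wᵀ is positive semidefinite. -/

import Mathlib

open Matrix

/-- A real square matrix is *stable* if every eigenvalue (over ℂ) has negative real part. -/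
def IsStable {n : ℕ} (A : Matrix (Fin n) (Fin n) ℝ) : Prop :=
  ∀ μ : ℂ, μ ∈ spectrum ℂ (A.map (algebraMap ℝ ℂ)) → μ.re < 0

/-- The `n × n` shift matrix `S` with `S_{i,i+1} = 1` and all other entries `0`. -/
def Smat (n : ℕ) : Matrix (Fin n) (Fin n) ℝ :=
  Matrix.of fun i j => if (i : ℕ) + 1 = (j : ℕ) then 1 else 0

/-- The last standard basis vector `g` of `ℝⁿ`. -/
def gvec (n : ℕ) : Fin n → ℝ := fun i => if (i : ℕ) = n - 1 then 1 else 0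

/-- `Π = I − g·gᵀ`, the orthogonal projection onto the orthogonal complement of `g`. -/
def Pimat (n : ℕ) : Matrix (Fin n) (Fin n) ℝ := 1 - vecMulVec (gvec n) (gvec n)

section Helpers

open Polynomial

variable {n : ℕ}

lemma vecMulVec_mul' (a : Fin n → ℝ) (b : Fin n → ℝ) (M : Matrix (Fin n) (Fin n) ℝ) :
    vecMulVec a b * M = vecMulVec a (vecMul b M) := by
  ext i j
  simp [vecMulVec_apply, mul_apply, vecMul, dotProduct, Finset.mul_sum, mul_assoc]

lemma mul_vecMulVec' (M : Matrix (Fin n) (Fin n) ℝ) (a b : Fin n → ℝ) :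
    M * vecMulVec a b = vecMulVec (M *ᵥ a) b := by
  ext i j
  simp [vecMulVec_apply, mul_apply, mulVec, dotProduct, Finset.sum_mul]
  apply Finset.sum_congr rfl; intros; ring

lemma vecMulVec_mulVec' (a b c : Fin n → ℝ) :
    vecMulVec a b *ᵥ c = (b ⬝ᵥ c) • a := by
  ext i
  simp only [vecMulVec_apply, mulVec, dotProduct, Pi.smul_apply, smul_eq_mul,
    Finset.sum_mul, Finset.mul_sum]
  apply Finset.sum_congr rfl; intros; ring

lemma transpose_vecMulVec' (a b : Fin n → ℝ) : (vecMulVec a b)ᵀ = vecMulVec b a := by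
  ext i j; simp [vecMulVec_apply, mul_comm]

lemma vecMul_eq_mulVec' (M : Matrix (Fin n) (Fin n) ℝ) (a : Fin n → ℝ) :
    a ᵥ* M = Mᵀ *ᵥ a := by
  ext j; simp [vecMul, mulVec, dotProduct, mul_comm]

lemma vecMulVec_add_right' (a b c : Fin n → ℝ) :
    vecMulVec a (b + c) = vecMulVec a b + vecMulVec a c := by
  ext i j; simp [vecMulVec_apply, mul_add]

lemma vecMulVec_add_left' (a b c : Fin n → ℝ) :
    vecMulVec (a + b) c = vecMulVec a c + vecMulVec b c := by
  ext i j; simp [vecMulVec_apply, add_mul]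

lemma vecMulVec_zero_left' (b : Fin n → ℝ) : vecMulVec (0 : Fin n → ℝ) b = 0 := by
  ext i j; simp [vecMulVec_apply]

lemma vecMulVec_zero_right' (b : Fin n → ℝ) : vecMulVec b (0 : Fin n → ℝ) = 0 := by
  ext i j; simp [vecMulVec_apply]

lemma smat_transpose_mulVec_g (hn : 0 < n) : (Smat n)ᵀ *ᵥ gvec n = 0 := by
  ext i
  simp only [mulVec, dotProduct, transpose_apply, Smat, gvec, Matrix.of_apply, Pi.zero_apply]
  rw [Finset.sum_eq_zero]
  intro j _
  rcases eq_or_ne ((j : ℕ)) (n-1) with hj | hj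
  · have hi := i.isLt
    have : (j:ℕ) + 1 ≠ (i:ℕ) := by omega
    simp [this]
  · simp [hj]

lemma g_vecMul_smat (hn : 0 < n) : gvec n ᵥ* Smat n = 0 := by
  ext j
  simp only [vecMul, dotProduct, Smat, gvec, Matrix.of_apply, Pi.zero_apply]
  rw [Finset.sum_eq_zero]
  intro i _
  rcases eq_or_ne ((i : ℕ)) (n-1) with hi | hi
  · have hj := j.isLt
    have : (i:ℕ) + 1 ≠ (j:ℕ) := by omega
    simp [this]
  · simp [hi]

lemma g_dot_g (hn : 0 < n) : gvec n ⬝ᵥ gvec n = 1 := by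
  simp only [dotProduct, gvec]
  rw [Finset.sum_eq_single (⟨n-1, by omega⟩ : Fin n)]
  · simp
  · intro b _ hb
    have : (b : ℕ) ≠ n - 1 := fun hc => hb (by ext; simpa using hc)
    simp [this]
  · intro hmem; exact absurd (Finset.mem_univ _) hmem

lemma pimat_mulVec_g (hn : 0 < n) : Pimat n *ᵥ gvec n = 0 := by
  rw [Pimat, sub_mulVec, one_mulVec, vecMulVec_mulVec', g_dot_g hn, one_smul, sub_self]

lemma pimat_transpose : (Pimat n)ᵀ = Pimat n := by
  rw [Pimat, transpose_sub, transpose_one, transpose_vecMulVec']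

lemma mem_spectrum_iff_eval_charpoly (M : Matrix (Fin n) (Fin n) ℂ) (μ : ℂ) :
    μ ∈ spectrum ℂ M ↔ (Matrix.charpoly M).eval μ = 0 := by
  rw [spectrum.mem_iff]
  have hmap : algebraMap ℂ (Matrix (Fin n) (Fin n) ℂ) μ - M
      = (charmatrix M).map (Polynomial.eval μ) := by
    ext i j
    rcases eq_or_ne i j with rfl | hij
    · simp [charmatrix_apply_eq, Matrix.algebraMap_matrix_apply]
    · simp [charmatrix_apply_ne _ _ _ hij, Matrix.algebraMap_matrix_apply, hij]
  rw [hmap, Matrix.isUnit_iff_isUnit_det]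
  have hdet : (M.charmatrix.map (Polynomial.eval μ)).det
      = Polynomial.eval μ M.charpoly := by
    have h := RingHom.map_det (Polynomial.evalRingHom μ) M.charmatrix
    rw [RingHom.mapMatrix_apply] at h
    rw [Matrix.charpoly, ← Polynomial.coe_evalRingHom]
    exact h.symm
  rw [hdet]
  simp [isUnit_iff_ne_zero, not_not]

lemma spectrum_transpose (M : Matrix (Fin n) (Fin n) ℂ) :
    spectrum ℂ Mᵀ = spectrum ℂ M := by
  ext μ
  rw [spectrum.mem_iff, spectrum.mem_iff]
  have : algebraMap ℂ (Matrix (Fin n) (Fin n) ℂ) μ - Mᵀ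
      = (algebraMap ℂ (Matrix (Fin n) (Fin n) ℂ) μ - M)ᵀ := by
    rw [Matrix.transpose_sub]
    congr 1
    ext i j
    rcases eq_or_ne i j with rfl | hij
    · simp [Matrix.algebraMap_matrix_apply]
    · simp [Matrix.algebraMap_matrix_apply, hij, Ne.symm hij]
  rw [this, Matrix.isUnit_iff_isUnit_det, Matrix.det_transpose,
    ← Matrix.isUnit_iff_isUnit_det]

lemma semiconj_aeval (A N Z : Matrix (Fin n) (Fin n) ℂ) (hz : A * Z = Z * N) (p : ℂ[X]) :
    aeval A p * Z = Z * aeval N p := by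
  have hpow : ∀ j : ℕ, A ^ j * Z = Z * N ^ j := by
    intro j
    induction j with
    | zero => simp
    | succ j ih =>
      rw [pow_succ', mul_assoc, ih, ← mul_assoc, hz, mul_assoc, ← pow_succ']
  induction p using Polynomial.induction_on' with
  | add p q hp hq => rw [map_add, map_add, add_mul, mul_add, hp, hq]
  | monomial k a =>
    rw [aeval_monomial, aeval_monomial, mul_assoc, hpow k, ← mul_assoc, ← mul_assoc,
      Algebra.commutes, mul_assoc]

lemma lyap_unique (hn : 0 < n) (A Z : Matrix (Fin n) (Fin n) ℝ) (hA : IsStable A)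
    (hZ : A * Z + Z * Aᵀ = 0) : Z = 0 := by
  set f := algebraMap ℝ ℂ with hf
  set A' := A.map f with hA'
  set Z' := Z.map f with hZ'
  have hmap : A' * Z' + Z' * A'ᵀ = 0 := by
    have hc := congrArg (f.mapMatrix : Matrix (Fin n) (Fin n) ℝ →+* Matrix (Fin n) (Fin n) ℂ) hZ
    simpa [RingHom.mapMatrix_apply, Matrix.map_add, Matrix.map_mul, Matrix.transpose_map,
      hA', hZ'] using hc
  have hsemi : A' * Z' = Z' * (-A'ᵀ) := by
    rw [mul_neg, eq_neg_iff_add_eq_zero]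
    exact hmap
  set p := A'.charpoly with hp
  have key : Z' * aeval (-A'ᵀ) p = 0 := by
    rw [← semiconj_aeval A' (-A'ᵀ) Z' hsemi p, hp, Matrix.aeval_self_charpoly, zero_mul]
  have hdeg : 0 < p.degree := by
    rw [hp, Matrix.charpoly_degree_eq_dim, Fintype.card_fin]
    exact_mod_cast hn
  have hU : IsUnit (aeval (-A'ᵀ) p) := by
    by_contra hcon
    have h0 : (0 : ℂ) ∈ spectrum ℂ (aeval (-A'ᵀ) p) := by
      rw [spectrum.zero_mem_iff]; exact hcon
    rw [spectrum.map_polynomial_aeval_of_degree_pos _ p hdeg] at h0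
    obtain ⟨ν, hν, hev⟩ := h0
    have h1 : -ν ∈ spectrum ℂ A' := by
      rw [← spectrum_transpose]
      have : ν ∈ -spectrum ℂ A'ᵀ := by rw [spectrum.neg_eq]; exact hν
      simpa using Set.neg_mem_neg.mpr this
    have h2 : ν ∈ spectrum ℂ A' := (mem_spectrum_iff_eval_charpoly _ _).mpr hev
    have r1 := hA (-ν) h1
    have r2 := hA ν h2
    simp only [Complex.neg_re] at r1
    linarith
  obtain ⟨u, hu⟩ := hU
  have hZ'0 : Z' = 0 := by
    calc Z' = Z' * (↑u * ↑u⁻¹) := by rw [Units.mul_inv, mul_one]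
    _ = Z' * aeval (-A'ᵀ) p * ↑u⁻¹ := by rw [← mul_assoc, hu]
    _ = 0 := by rw [key, zero_mul]
  ext i j
  have := congrFun (congrFun hZ'0 i) j
  simpa [hZ', Matrix.map_apply, hf] using this

lemma psd_left_zero {X Y : Matrix (Fin n) (Fin n) ℝ} (hX : X.PosSemidef) (hY : Y.PosSemidef)
    (hsum : X + Y = 0) : X = 0 := by
  have hall : ∀ x : Fin n → ℝ, X *ᵥ x = 0 := by
    intro x
    have h1 : (0:ℝ) ≤ x ⬝ᵥ X *ᵥ x := by simpa using hX.dotProduct_mulVec_nonneg x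
    have h2 : (0:ℝ) ≤ x ⬝ᵥ Y *ᵥ x := by simpa using hY.dotProduct_mulVec_nonneg x
    have h3 : x ⬝ᵥ X *ᵥ x + x ⬝ᵥ Y *ᵥ x = 0 := by
      have := congrArg (fun M => x ⬝ᵥ M *ᵥ x) hsum
      simpa [add_mulVec, dotProduct_add] using this
    have h4 : x ⬝ᵥ X *ᵥ x = 0 := by linarith
    have := (hX.dotProduct_mulVec_zero_iff x).mp (by simpa using h4)
    exact this
  ext i j
  have := congrFun (hall (Pi.single j 1)) i
  simpa [mulVec, dotProduct, Pi.single_apply] using this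

lemma psd_cauchy_schwarz {Y : Matrix (Fin n) (Fin n) ℝ} (hY : Y.PosSemidef)
    (x u : Fin n → ℝ) :
    (x ⬝ᵥ Y *ᵥ u) ^ 2 ≤ (x ⬝ᵥ Y *ᵥ x) * (u ⬝ᵥ Y *ᵥ u) := by
  have hYsym : Yᵀ = Y := hY.1
  have hsymm : u ⬝ᵥ Y *ᵥ x = x ⬝ᵥ Y *ᵥ u := by
    rw [dotProduct_mulVec u Y x, vecMul_eq_mulVec', hYsym, dotProduct_comm]
  have hquad : ∀ t : ℝ, 0 ≤ (u ⬝ᵥ Y *ᵥ u) * (t * t) + (2 * (x ⬝ᵥ Y *ᵥ u)) * t + x ⬝ᵥ Y *ᵥ x := by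
    intro t
    have h0 : (0:ℝ) ≤ (x + t • u) ⬝ᵥ Y *ᵥ (x + t • u) := by simpa using hY.dotProduct_mulVec_nonneg (x + t • u)
    have hexp : (x + t • u) ⬝ᵥ Y *ᵥ (x + t • u)
        = (u ⬝ᵥ Y *ᵥ u) * (t * t) + (2 * (x ⬝ᵥ Y *ᵥ u)) * t + x ⬝ᵥ Y *ᵥ x := by
      simp only [mulVec_add, mulVec_smul, dotProduct_add, add_dotProduct,
        smul_dotProduct, dotProduct_smul, smul_eq_mul]
      rw [hsymm]
      ring
    rw [hexp] at h0
    exact h0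
  have hd := discrim_le_zero hquad
  rw [discrim] at hd
  nlinarith [hd]

end Helpers

/-- From a nonzero positive semidefinite solution `(X, Y)` of
`A·X + X·Aᵀ + B·Y + Y·Bᵀ = 0` for stable companion-form matrices `A = S + g·hᵀ`,
`B = S + g·kᵀ`, the matrix `Z = X + Y` and the vector
`w = ⟨k−h, Y(k−h)⟩^{−1/2}·Y(k−h)` satisfy the reduced system (i)–(iii). -/
theorem XY_solution_gives_Z_w {n : ℕ} (hn : 0 < n) (h k : Fin n → ℝ)
    (hA : IsStable (Smat n + vecMulVec (gvec n) h))
    (hB : IsStable (Smat n + vecMulVec (gvec n) k))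
    (X Y : Matrix (Fin n) (Fin n) ℝ) (hX0 : X ≠ 0) (hY0 : Y ≠ 0)
    (hX : X.PosSemidef) (hY : Y.PosSemidef)
    (heq : (Smat n + vecMulVec (gvec n) h) * X + X * (Smat n + vecMulVec (gvec n) h)ᵀ +
      (Smat n + vecMulVec (gvec n) k) * Y + Y * (Smat n + vecMulVec (gvec n) k)ᵀ = 0) :
    0 < (k - h) ⬝ᵥ Y.mulVec (k - h) ∧
    (Pimat n * Smat n * (X + Y) * Pimat n + Pimat n * (X + Y) * (Smat n)ᵀ * Pimat n = 0 ∧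
     (Smat n * (X + Y)).mulVec (gvec n) + (X + Y).mulVec h +
       ((Real.sqrt ((k - h) ⬝ᵥ Y.mulVec (k - h)))⁻¹ • Y.mulVec (k - h) ⬝ᵥ (k - h)) •
         ((Real.sqrt ((k - h) ⬝ᵥ Y.mulVec (k - h)))⁻¹ • Y.mulVec (k - h)) = 0 ∧
     ((X + Y) - vecMulVec ((Real.sqrt ((k - h) ⬝ᵥ Y.mulVec (k - h)))⁻¹ • Y.mulVec (k - h))
        ((Real.sqrt ((k - h) ⬝ᵥ Y.mulVec (k - h)))⁻¹ • Y.mulVec (k - h))).PosSemidef) := by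
  have hXsym : Xᵀ = X := hX.1
  have hYsym : Yᵀ = Y := hY.1
  set u : Fin n → ℝ := k - h with hu
  set Z := X + Y with hZdef
  set v : Fin n → ℝ := X *ᵥ h + Y *ᵥ k with hv
  set q : ℝ := u ⬝ᵥ Y *ᵥ u with hqdef
  -- restructure the Lyapunov-type equation
  have heq' : Smat n * Z + Z * (Smat n)ᵀ + vecMulVec (gvec n) v + vecMulVec v (gvec n) = 0 := by
    have expand : (Smat n + vecMulVec (gvec n) h) * X + X * (Smat n + vecMulVec (gvec n) h)ᵀ +
        (Smat n + vecMulVec (gvec n) k) * Y + Y * (Smat n + vecMulVec (gvec n) k)ᵀ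
        = Smat n * Z + Z * (Smat n)ᵀ + vecMulVec (gvec n) v + vecMulVec v (gvec n) := by
      rw [hZdef, hv, transpose_add, transpose_add, transpose_vecMulVec',
        transpose_vecMulVec', add_mul, add_mul, mul_add, mul_add,
        vecMulVec_mul' (gvec n) h X, vecMulVec_mul' (gvec n) k Y,
        mul_vecMulVec' X h (gvec n), mul_vecMulVec' Y k (gvec n),
        vecMul_eq_mulVec' X h, vecMul_eq_mulVec' Y k, hXsym, hYsym,
        vecMulVec_add_right' (gvec n) (X *ᵥ h) (Y *ᵥ k),
        vecMulVec_add_left' (X *ᵥ h) (Y *ᵥ k) (gvec n),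
        add_mul, mul_add]
      abel
    exact expand.symm.trans heq
  -- positivity of q
  have hq0 : 0 ≤ q := by simpa [hqdef] using hY.dotProduct_mulVec_nonneg u
  have hqne : q ≠ 0 := by
    intro hq
    have hYu : Y *ᵥ u = 0 := by
      refine (hY.dotProduct_mulVec_zero_iff u).mp ?_
      simpa [hqdef] using hq
    have hYk : Y *ᵥ k = Y *ᵥ h := by
      have h0 : Y *ᵥ k - Y *ᵥ h = 0 := by rw [← mulVec_sub]; exact hYu
      exact sub_eq_zero.mp h0
    have hBY : (Smat n + vecMulVec (gvec n) k) * Y = (Smat n + vecMulVec (gvec n) h) * Y := by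
      rw [add_mul, add_mul, vecMulVec_mul' (gvec n) k Y, vecMulVec_mul' (gvec n) h Y,
        vecMul_eq_mulVec' Y k, vecMul_eq_mulVec' Y h, hYsym, hYk]
    have hYB : Y * (Smat n + vecMulVec (gvec n) k)ᵀ = Y * (Smat n + vecMulVec (gvec n) h)ᵀ := by
      have hc := congrArg Matrix.transpose hBY
      rw [transpose_mul, transpose_mul, hYsym] at hc
      exact hc
    have hAZ : (Smat n + vecMulVec (gvec n) h) * Z + Z * (Smat n + vecMulVec (gvec n) h)ᵀ = 0 := by
      have e1 : (Smat n + vecMulVec (gvec n) h) * Z + Z * (Smat n + vecMulVec (gvec n) h)ᵀ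
          = (Smat n + vecMulVec (gvec n) h) * X + X * (Smat n + vecMulVec (gvec n) h)ᵀ +
            (Smat n + vecMulVec (gvec n) k) * Y + Y * (Smat n + vecMulVec (gvec n) k)ᵀ := by
        rw [hBY, hYB, hZdef, mul_add, add_mul X Y ((Smat n + vecMulVec (gvec n) h)ᵀ)]
        abel
      rw [e1]
      exact heq
    have hZ0 : Z = 0 := lyap_unique hn _ _ hA hAZ
    exact hX0 (psd_left_zero hX hY (hZdef ▸ hZ0))
  have hqpos : 0 < q := lt_of_le_of_ne hq0 (Ne.symm hqne)
  have hsq : Real.sqrt q ≠ 0 := ne_of_gt (Real.sqrt_pos.mpr hqpos)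
  have halpha : ((Real.sqrt q)⁻¹) ^ 2 = q⁻¹ := by
    rw [inv_pow, Real.sq_sqrt hq0]
  -- the key vector identity
  have hstar : (Smat n * Z) *ᵥ gvec n + ((v ⬝ᵥ gvec n) • gvec n + v) = 0 := by
    have hc := congrArg (fun M => M *ᵥ gvec n) heq'
    simp only [add_mulVec, Matrix.zero_mulVec] at hc
    rw [show (Z * (Smat n)ᵀ) *ᵥ gvec n = Z *ᵥ ((Smat n)ᵀ *ᵥ gvec n) from
        (Matrix.mulVec_mulVec _ _ _).symm,
      smat_transpose_mulVec_g hn, mulVec_zero,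
      vecMulVec_mulVec', vecMulVec_mulVec', g_dot_g hn, one_smul] at hc
    rw [← hc]
    abel
  have hvg : v ⬝ᵥ gvec n = 0 := by
    have hd := congrArg (fun y => gvec n ⬝ᵥ y) hstar
    simp only [dotProduct_add, dotProduct_zero, dotProduct_smul, smul_eq_mul] at hd
    have h1 : gvec n ⬝ᵥ (Smat n * Z) *ᵥ gvec n = 0 := by
      rw [dotProduct_mulVec, ← Matrix.vecMul_vecMul, g_vecMul_smat hn, Matrix.zero_vecMul,
        zero_dotProduct]
    rw [h1, g_dot_g hn, mul_one, dotProduct_comm (gvec n) v] at hd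
    linarith
  have hkey : (Smat n * Z) *ᵥ gvec n + v = 0 := by
    have := hstar
    rw [hvg, zero_smul, zero_add] at this
    exact this
  refine ⟨hqpos, ?_, ?_, ?_⟩
  · -- (i)
    have hPiG1 : Pimat n * vecMulVec (gvec n) v = 0 := by
      rw [mul_vecMulVec', pimat_mulVec_g hn, vecMulVec_zero_left']
    have hG2Pi : vecMulVec v (gvec n) * Pimat n = 0 := by
      rw [vecMulVec_mul', vecMul_eq_mulVec', pimat_transpose, pimat_mulVec_g hn,
        vecMulVec_zero_right']
    have hc := congrArg (fun M => Pimat n * M * Pimat n) heq'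
    simp only [mul_add, add_mul, mul_zero, zero_mul] at hc
    rw [← mul_assoc, ← mul_assoc, hPiG1, zero_mul,
      mul_assoc (Pimat n) (vecMulVec v (gvec n)) (Pimat n), hG2Pi, mul_zero] at hc
    simpa using hc
  · -- (ii)
    have hq' : (Y *ᵥ u) ⬝ᵥ u = q := by rw [hqdef, dotProduct_comm]
    have hterm : (((Real.sqrt q)⁻¹ • (Y *ᵥ u)) ⬝ᵥ u) • ((Real.sqrt q)⁻¹ • (Y *ᵥ u))
        = Y *ᵥ u := by
      simp only [smul_dotProduct, hq', smul_eq_mul, smul_smul]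
      have hone : (Real.sqrt q)⁻¹ * q * (Real.sqrt q)⁻¹ = 1 := by
        rw [← Real.mul_self_sqrt hq0]
        field_simp
        rw [Real.sqrt_sq (Real.sqrt_nonneg _)]
      rw [hone, one_smul]
    have hZh : Z *ᵥ h + Y *ᵥ u = v := by
      rw [hZdef, hu, hv, add_mulVec, mulVec_sub]
      abel
    rw [hterm, add_assoc, hZh]
    exact hkey
  · -- (iii)
    have hww : (vecMulVec ((Real.sqrt q)⁻¹ • (Y *ᵥ u)) ((Real.sqrt q)⁻¹ • (Y *ᵥ u))).IsHermitian := by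
      ext i j
      simp [Matrix.conjTranspose_apply, vecMulVec_apply, mul_comm]
      ring
    refine Matrix.PosSemidef.of_dotProduct_mulVec_nonneg (((hX.1.add hY.1)).sub hww) ?_
    intro x
    have hcs := psd_cauchy_schwarz hY x u
    have hXx : (0:ℝ) ≤ x ⬝ᵥ X *ᵥ x := by simpa using hX.dotProduct_mulVec_nonneg x
    have hYx : (0:ℝ) ≤ x ⬝ᵥ Y *ᵥ x := by simpa using hY.dotProduct_mulVec_nonneg x
    have hform : star x ⬝ᵥ (Z - vecMulVec ((Real.sqrt q)⁻¹ • (Y *ᵥ u)) ((Real.sqrt q)⁻¹ • (Y *ᵥ u))) *ᵥ x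
        = x ⬝ᵥ X *ᵥ x + x ⬝ᵥ Y *ᵥ x - q⁻¹ * ((x ⬝ᵥ Y *ᵥ u) * (x ⬝ᵥ Y *ᵥ u)) := by
      rw [star_trivial, sub_mulVec, dotProduct_sub, hZdef, add_mulVec, dotProduct_add,
        vecMulVec_mulVec']
      have hd : x ⬝ᵥ ((((Real.sqrt q)⁻¹ • (Y *ᵥ u)) ⬝ᵥ x) • ((Real.sqrt q)⁻¹ • (Y *ᵥ u)))
          = q⁻¹ * ((x ⬝ᵥ Y *ᵥ u) * (x ⬝ᵥ Y *ᵥ u)) := by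
        simp only [dotProduct_smul, smul_dotProduct, smul_eq_mul,
          dotProduct_comm (Y *ᵥ u) x]
        rw [← halpha]
        ring
      rw [hd]
    rw [hform]
    have hineq : q⁻¹ * ((x ⬝ᵥ Y *ᵥ u) * (x ⬝ᵥ Y *ᵥ u)) ≤ x ⬝ᵥ Y *ᵥ x := by
      have h2 : (x ⬝ᵥ Y *ᵥ u) * (x ⬝ᵥ Y *ᵥ u) ≤ (x ⬝ᵥ Y *ᵥ x) * q := by
        nlinarith [hcs]
      calc q⁻¹ * ((x ⬝ᵥ Y *ᵥ u) * (x ⬝ᵥ Y *ᵥ u)) ≤ q⁻¹ * ((x ⬝ᵥ Y *ᵥ x) * q) :=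
            mul_le_mul_of_nonneg_left h2 (inv_nonneg.mpr hq0)
      _ = x ⬝ᵥ Y *ᵥ x := by field_simp
    linarith
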